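/- Let a > 1 with a² ≠ 5, let h ∈ ℝ, set g = √(a²−1) and T = √2·a·π. Then for all ρ, s ∈ ℝ, (1/T)·∫₀ᵀ F11(θ,ρ,s) dθ = (sin(π g)·sin(g(πa + √2 s)/a) / (2√2·π·a³·(a²−5)·g)) · (2a²(a²−3)²h + (a²−5)ρ²·(cos(2√2 g s/a) + cos(2g(πa + √2 s)/a) + cos(2g(2πa + √2 s)/a) + cos(2πg)) − 2(a⁶ − 7a⁴ + 14a² − 4)ρ²), where F11(θ,ρ,s) = (1/(√2·a³))·sin(√2 g(θ+s)/a)·((a²−3)(a²(h−ρ²)+ρ²)·cos²(√2 θ/a) + 3ρ²·cos²(√2 g(θ+s)/a)). -/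

import Mathlib

open Real

private lemma trig1 (X Z : ℝ) : Real.sin X * Real.cos Z ^ 2
    = Real.sin X / 2 + Real.sin (X + 2*Z) / 4 + Real.sin (X - 2*Z) / 4 := by
  rw [Real.sin_add, Real.sin_sub, Real.cos_two_mul, Real.sin_two_mul]
  ring

private lemma trig2 (X : ℝ) : Real.sin X * Real.cos X ^ 2
    = Real.sin X / 4 + Real.sin (3*X) / 4 := by
  rw [Real.sin_three_mul]
  linear_combination Real.sin X * Real.sin_sq_add_cos_sq X

private lemma trig3 (X Y : ℝ) : Real.cos (3*X) - Real.cos (3*Y)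
    = (Real.cos X - Real.cos Y) *
      (1 + 2*(Real.cos (2*X) + Real.cos (X+Y) + Real.cos (2*Y) + Real.cos (Y-X))) := by
  rw [Real.cos_three_mul, Real.cos_three_mul, Real.cos_two_mul, Real.cos_two_mul,
    Real.cos_add, Real.cos_sub]
  ring

private lemma deriv_aux (k φ m : ℝ) (θ : ℝ) :
    HasDerivAt (fun t : ℝ => -(m * Real.cos (k*t+φ))) (m * k * Real.sin (k*θ+φ)) θ := by
  have h1 : HasDerivAt (fun t : ℝ => k*t+φ) k θ := by
    simpa using ((hasDerivAt_id θ).const_mul k).add_const φ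
  have h2 := (h1.cos.const_mul m).neg
  exact h2.congr_deriv (by ring)

set_option maxHeartbeats 2000000 in
open Real in
theorem averaged_function_f1_closed_form (a h : ℝ) (ha : 1 < a) (ha5 : a ^ 2 ≠ 5)
    (g T : ℝ) (hg : g = Real.sqrt (a ^ 2 - 1)) (hT : T = Real.sqrt 2 * a * π)
    (F11 : ℝ → ℝ → ℝ → ℝ)
    (hF11 : ∀ θ ρ s : ℝ, F11 θ ρ s =
      (1 / (Real.sqrt 2 * a ^ 3)) * Real.sin (Real.sqrt 2 * g * (θ + s) / a) *
        ((a ^ 2 - 3) * (a ^ 2 * (h - ρ ^ 2) + ρ ^ 2) * Real.cos (Real.sqrt 2 * θ / a) ^ 2 +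
         3 * ρ ^ 2 * Real.cos (Real.sqrt 2 * g * (θ + s) / a) ^ 2)) :
    ∀ ρ s : ℝ,
      (1 / T) * (∫ θ in (0 : ℝ)..T, F11 θ ρ s) =
        (Real.sin (π * g) * Real.sin (g * (π * a + Real.sqrt 2 * s) / a) /
          (2 * Real.sqrt 2 * π * a ^ 3 * (a ^ 2 - 5) * g)) *
        (2 * a ^ 2 * (a ^ 2 - 3) ^ 2 * h +
         (a ^ 2 - 5) * ρ ^ 2 *
           (Real.cos (2 * Real.sqrt 2 * g * s / a) +
            Real.cos (2 * g * (π * a + Real.sqrt 2 * s) / a) +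
            Real.cos (2 * g * (2 * π * a + Real.sqrt 2 * s) / a) +
            Real.cos (2 * π * g)) -
         2 * (a ^ 6 - 7 * a ^ 4 + 14 * a ^ 2 - 4) * ρ ^ 2) := by
  intro ρ s
  have ha0 : a ≠ 0 := by intro hh; rw [hh] at ha; norm_num at ha
  have hapos : (0:ℝ) < a := lt_trans one_pos ha
  set q := Real.sqrt 2 with hqdef
  have hq0 : (0:ℝ) < q := by rw [hqdef]; positivity
  have hq2 : q * q = 2 := Real.mul_self_sqrt (by norm_num)
  have hg1 : (0:ℝ) < a^2 - 1 := by nlinarith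
  have hgpos : 0 < g := by rw [hg]; exact Real.sqrt_pos.2 hg1
  have hg2 : g^2 = a^2 - 1 := by rw [hg]; exact Real.sq_sqrt hg1.le
  have hgp2 : g + 2 ≠ 0 := by positivity
  have hgm2 : g - 2 ≠ 0 := by
    intro hh
    apply ha5
    have : g = 2 := by linarith
    nlinarith [hg2]
  have ha2_5 : a^2 - 5 ≠ 0 := sub_ne_zero.2 ha5
  have hπ : (π:ℝ) ≠ 0 := Real.pi_ne_zero
  set u := q*g*s/a with hu
  set v := 2*π*g + u with hv
  set c1 := q*g/a with hc1
  set c2 := q*(g+2)/a with hc2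
  set c3 := q*(g-2)/a with hc3
  set G : ℝ → ℝ := fun t =>
    1/(q*a^3) * ((a ^ 2 - 3) * (a ^ 2 * (h - ρ ^ 2) + ρ ^ 2) *
        (-(a/(2*q*g) * Real.cos (c1*t+u)) + -(a/(4*q*(g+2)) * Real.cos (c2*t+u))
          + -(a/(4*q*(g-2)) * Real.cos (c3*t+u)))
      + 3*ρ^2 * (-(a/(4*q*g) * Real.cos (c1*t+u)) + -(a/(12*q*g) * Real.cos (3*c1*t+3*u)))) with hG
  have hGd : ∀ θ : ℝ, HasDerivAt G (F11 θ ρ s) θ := by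
    intro θ
    have d1 := deriv_aux c1 u (a/(2*q*g)) θ
    have d2 := deriv_aux c2 u (a/(4*q*(g+2))) θ
    have d3 := deriv_aux c3 u (a/(4*q*(g-2))) θ
    have d4 := deriv_aux c1 u (a/(4*q*g)) θ
    have d5 := deriv_aux (3*c1) (3*u) (a/(12*q*g)) θ
    have dd := ((((d1.add d2).add d3).const_mul
        ((a ^ 2 - 3) * (a ^ 2 * (h - ρ ^ 2) + ρ ^ 2))).add
        ((d4.add d5).const_mul (3*ρ^2))).const_mul (1/(q*a^3))
    have hval : F11 θ ρ s =
        1/(q*a^3) * ((a ^ 2 - 3) * (a ^ 2 * (h - ρ ^ 2) + ρ ^ 2) *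
            (a/(2*q*g) * c1 * Real.sin (c1*θ+u) + a/(4*q*(g+2)) * c2 * Real.sin (c2*θ+u)
              + a/(4*q*(g-2)) * c3 * Real.sin (c3*θ+u))
          + 3*ρ^2 * (a/(4*q*g) * c1 * Real.sin (c1*θ+u)
              + a/(12*q*g) * (3*c1) * Real.sin (3*c1*θ+3*u))) := by
      rw [hF11]
      rw [show q*g*(θ+s)/a = c1*θ+u from by rw [hc1, hu]; ring]
      rw [show c2*θ+u = c1*θ+u + 2*(q*θ/a) from by rw [hc2, hc1, hu]; ring]
      rw [show c3*θ+u = c1*θ+u - 2*(q*θ/a) from by rw [hc3, hc1, hu]; ring]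
      rw [show 3*c1*θ+3*u = 3*(c1*θ+u) from by ring]
      rw [show a/(2*q*g) * c1 = 1/2 from by rw [hc1]; field_simp]
      rw [show a/(4*q*(g+2)) * c2 = 1/4 from by rw [hc2]; field_simp]
      rw [show a/(4*q*(g-2)) * c3 = 1/4 from by rw [hc3]; field_simp]
      rw [show a/(4*q*g) * c1 = 1/4 from by rw [hc1]; field_simp]
      rw [show a/(12*q*g) * (3*c1) = 1/4 from by rw [hc1]; field_simp; ring]
      linear_combination (1/(q*a^3)) * ((a ^ 2 - 3) * (a ^ 2 * (h - ρ ^ 2) + ρ ^ 2)) *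
          trig1 (c1*θ+u) (q*θ/a)
        + (1/(q*a^3)) * (3*ρ^2) * trig2 (c1*θ+u)
    rw [hval]
    exact dd
  have hcont : Continuous fun θ => F11 θ ρ s := by
    have hfe : (fun θ => F11 θ ρ s) = fun θ =>
        (1 / (q * a ^ 3)) * Real.sin (q * g * (θ + s) / a) *
        ((a ^ 2 - 3) * (a ^ 2 * (h - ρ ^ 2) + ρ ^ 2) * Real.cos (q * θ / a) ^ 2 +
         3 * ρ ^ 2 * Real.cos (q * g * (θ + s) / a) ^ 2) := funext fun θ => hF11 θ ρ s
    rw [hfe]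
    fun_prop
  have hInt : ∫ θ in (0:ℝ)..T, F11 θ ρ s = G T - G 0 :=
    intervalIntegral.integral_eq_sub_of_hasDerivAt (fun θ _ => hGd θ)
      (hcont.intervalIntegrable 0 T)
  rw [hInt]
  simp only [hG]
  have eqT1 : c1*T = 2*π*g := by
    rw [hc1, hT]; field_simp; linear_combination hq2
  have eqT2 : c2*T = 2*π*g+2*π+2*π := by
    rw [hc2, hT]; field_simp; linear_combination (g+2)*hq2
  have eqT3 : c3*T = 2*π*g-2*π-2*π := by
    rw [hc3, hT]; field_simp; linear_combination (g-2)*hq2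
  have E1 : Real.cos (c1*T+u) = Real.cos v := by rw [hv, ← eqT1]
  have E2 : Real.cos (c2*T+u) = Real.cos v := by
    rw [show c2*T+u = v + 2*π + 2*π from by rw [hv, eqT2]; ring,
      Real.cos_add_two_pi, Real.cos_add_two_pi]
  have E3 : Real.cos (c3*T+u) = Real.cos v := by
    rw [show c3*T+u = v - 2*π - 2*π from by rw [hv, eqT3]; ring,
      Real.cos_sub_two_pi, Real.cos_sub_two_pi]
  have E4 : Real.cos (3*c1*T+3*u) = Real.cos (3*v) := by
    rw [show 3*c1*T+3*u = 3*v from by rw [hv]; linear_combination 3*eqT1]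
  have E5 : Real.cos (c1*0+u) = Real.cos u := by rw [show c1*0+u = u from by ring]
  have E6 : Real.cos (c2*0+u) = Real.cos u := by rw [show c2*0+u = u from by ring]
  have E7 : Real.cos (c3*0+u) = Real.cos u := by rw [show c3*0+u = u from by ring]
  have E8 : Real.cos (3*c1*0+3*u) = Real.cos (3*u) := by
    rw [show 3*c1*0+3*u = 3*u from by ring]
  have R1 : Real.sin (g*(π*a+q*s)/a) = Real.sin (π*g+u) := by
    congr 1; rw [hu]; field_simp
  have R2 : Real.cos (2*q*g*s/a) = Real.cos (2*u) := by
    congr 1; rw [hu]; field_simp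
  have R3 : Real.cos (2*g*(π*a+q*s)/a) = Real.cos (u+v) := by
    congr 1; rw [hv, hu]; field_simp; ring
  have R4 : Real.cos (2*g*(2*π*a+q*s)/a) = Real.cos (2*v) := by
    congr 1; rw [hv, hu]; field_simp
  have R5 : Real.cos (2*π*g) = Real.cos (v-u) := by congr 1; rw [hv]; ring
  rw [E1, E2, E3, E4, E5, E6, E7, E8, R1, R2, R3, R4, R5, hT]
  have hprod : Real.sin (π*g) * Real.sin (π*g+u) = (Real.cos u - Real.cos v)/2 := by
    have hcc := Real.cos_sub_cos u v
    rw [show (u+v)/2 = π*g+u from by rw [hv]; ring,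
      show (u-v)/2 = -(π*g) from by rw [hv]; ring, Real.sin_neg] at hcc
    linear_combination (-1/2)*hcc
  have htrig3 := trig3 u v
  field_simp
  clear hGd hcont hInt hG G
  clear_value q u v c1 c2 c3
  linear_combination (24*ρ^2*(a^2-5)*(g+2)*(g-2)) * htrig3 + (-48*q^2*(g+2)*(g-2)*(a ^ 2 * (a ^ 2 - 3) ^ 2 * h * 2 + ρ ^ 2 * (a ^ 2 - 5) * (Real.cos (2 * u) + Real.cos (u + v) + Real.cos (2 * v) + Real.cos (v - u)) - ρ ^ 2 * 2 * (a ^ 2 * (a ^ 2 * (a ^ 2 - 7) + 14) - 4))) * hprod + (-24*(g+2)*(g-2)*(a ^ 2 * (a ^ 2 - 3) ^ 2 * h * 2 + ρ ^ 2 * (a ^ 2 - 5) * (Real.cos (2 * u) + Real.cos (u + v) + Real.cos (2 * v) + Real.cos (v - u)) - ρ ^ 2 * 2 * (a ^ 2 * (a ^ 2 * (a ^ 2 - 7) + 14) - 4))*(Real.cos u - Real.cos v)) * hq2 + ((Real.cos u - Real.cos v)*((a^2-5)*(96*((a ^ 2 - 3) * (a ^ 2 * (h - ρ ^ 2) + ρ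 ^ 2)) + 6*ρ^2*(16+8*(Real.cos (2 * u) + Real.cos (u + v) + Real.cos (2 * v) + Real.cos (v - u)))) - 48*(a ^ 2 * (a ^ 2 - 3) ^ 2 * h * 2 + ρ ^ 2 * (a ^ 2 - 5) * (Real.cos (2 * u) + Real.cos (u + v) + Real.cos (2 * v) + Real.cos (v - u)) - ρ ^ 2 * 2 * (a ^ 2 * (a ^ 2 * (a ^ 2 - 7) + 14) - 4)))) * hg2
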